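/- For n ≥ 6 and 1 ≤ k ≤ ⌊n/2⌋ - 1: P^{n,k}(1) = 2k - n + 1 ≤ -1, and P^{n,k}(2) > 0. Consequently P^{n,k} has a root in (1,2). -/

import Mathlib

open Finset

/-- P^{n,k}(r) = Σ_{j=0}^{k-1} r^{C(n-j,2)-(k-j)} - Σ_{i=0}^{m-3} r^{C(m,2)-m-i},
m = n - k + 1. -/
noncomputable def Pexp (n k : ℕ) (r : ℝ) : ℝ :=
  (∑ j ∈ Finset.range k, r ^ ((n - j) * (n - j - 1) / 2 - (k - j)))
    - ∑ i ∈ Finset.range (n - k + 1 - 2),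
        r ^ ((n - k + 1) * (n - k) / 2 - (n - k + 1) - i)

lemma sum_range_two_pow (N : ℕ) : ∑ t ∈ Finset.range N, 2 ^ t = 2 ^ N - 1 := by
  induction N with
  | zero => simp
  | succ N ih =>
    rw [Finset.sum_range_succ, ih]
    have : 1 ≤ 2 ^ N := Nat.one_le_two_pow
    omega

lemma two_dvd_mul_pred (p : ℕ) : 2 * (p * (p - 1) / 2) = p * (p - 1) := by
  have h : Even (p * (p - 1)) := by
    rcases p with _ | q
    · simp
    · simpa [Nat.succ_sub_one, mul_comm] using Nat.even_mul_succ_self q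
  exact Nat.mul_div_cancel' h.two_dvd

/-- For n ≥ 6 and 1 ≤ k ≤ ⌊n/2⌋ - 1: P^{n,k}(1) = 2k - n + 1 ≤ -1 and
P^{n,k}(2) > 0; consequently P^{n,k} has a root in (1,2). -/
theorem stmt_14 (n k : ℕ) (hn : 6 ≤ n) (hk : 1 ≤ k) (hkn : k ≤ n / 2 - 1) :
    Pexp n k 1 = 2 * (k : ℝ) - n + 1 ∧ 2 * (k : ℝ) - n + 1 ≤ -1 ∧
    0 < Pexp n k 2 ∧ ∃ r ∈ Set.Ioo (1 : ℝ) 2, Pexp n k r = 0 := by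
  have hk2 : 2 * k + 2 ≤ n := by omega
  -- value at 1
  have h1 : Pexp n k 1 = 2 * (k : ℝ) - n + 1 := by
    unfold Pexp
    simp only [one_pow, Finset.sum_const, Finset.card_range, nsmul_eq_mul, mul_one]
    have h : n - k + 1 - 2 = n - (k + 1) := by omega
    rw [h]
    have : ((n - (k + 1) : ℕ) : ℝ) = (n : ℝ) - (k + 1) := by
      have hle : k + 1 ≤ n := by omega
      push_cast [hle]; ring
    rw [this]; ring
  have h2 : 2 * (k : ℝ) - n + 1 ≤ -1 := by
    have : (2 * k + 2 : ℝ) ≤ n := by exact_mod_cast hk2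
    linarith
  -- value at 2
  have hm5 : 5 ≤ n - k + 1 := by omega
  have hpos : 0 < Pexp n k 2 := by
    have heM := two_dvd_mul_pred (n - k + 1)
    have heN := two_dvd_mul_pred n
    have hsub : n - k + 1 - 1 = n - k := by omega
    rw [hsub] at heM
    have hNn : n * 1 ≤ n * (n - 1) := Nat.mul_le_mul_left n (by omega)
    have key : 2 * k + 2 + (n - k + 1) * (n - k) ≤ n * (n - 1) + 2 * (n - k + 1) := by
      have h1m : (1:ℕ) ≤ n - k + 1 := by omega
      have h1n : (1:ℕ) ≤ n := by omega
      zify [h1m, h1n, show k ≤ n by omega]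
      nlinarith [hk, hk2, hn, sq_nonneg ((k:ℤ) - 1)]
    -- E ≥ m - 3 and a ≥ E + 1 in ℕ
    have hEm : (n - k + 1) - 3 ≤ (n - k + 1) * (n - k) / 2 - (n - k + 1) := by
      generalize hP : (n - k + 1) * (n - k) = P at heM ⊢
      have : 2 * (2 * (n - k + 1) - 3) ≤ P := by
        rw [← hP]
        obtain ⟨q, hq⟩ : ∃ q, n - k + 1 = q + 5 := ⟨n - k + 1 - 5, by omega⟩
        have hq2 : n - k = q + 4 := by omega
        rw [hq, hq2]
        have h1 : 2 * (q + 5) - 3 = 2 * q + 7 := by omega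
        rw [h1]
        nlinarith [Nat.zero_le (q * q)]
      omega
    have hEa : (n - k + 1) * (n - k) / 2 - (n - k + 1) + 1
        ≤ n * (n - 1) / 2 - k := by
      generalize hP : (n - k + 1) * (n - k) = P at heM key ⊢
      generalize hN : n * (n - 1) = N at heN key hNn ⊢
      omega
    -- the two natural sums
    have hS1 : (2 : ℕ) ^ (n * (n - 1) / 2 - k)
        ≤ ∑ j ∈ Finset.range k, 2 ^ ((n - j) * (n - j - 1) / 2 - (k - j)) := by
      have h0 : (0 : ℕ) ∈ Finset.range k := by simp; omega
      have := Finset.single_le_sum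
        (f := fun j => (2:ℕ) ^ ((n - j) * (n - j - 1) / 2 - (k - j)))
        (fun i _ => Nat.zero_le _) h0
      simpa using this
    have hS2 : (∑ i ∈ Finset.range (n - k + 1 - 2),
          2 ^ ((n - k + 1) * (n - k) / 2 - (n - k + 1) - i))
        ≤ 2 ^ ((n - k + 1) * (n - k) / 2 - (n - k + 1) + 1) - 1 := by
      set E : ℕ := (n - k + 1) * (n - k) / 2 - (n - k + 1) with hE
      have himg : ∑ i ∈ Finset.range (n - k + 1 - 2), 2 ^ (E - i)
          = ∑ t ∈ (Finset.range (n - k + 1 - 2)).image (fun i => E - i), 2 ^ t := by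
        rw [Finset.sum_image]
        intro x hx y hy hxy
        simp only [Finset.mem_coe, Finset.mem_range] at hx hy hxy
        omega
      rw [himg, ← sum_range_two_pow (E + 1)]
      apply Finset.sum_le_sum_of_subset
      intro t ht
      simp only [Finset.mem_image, Finset.mem_range] at ht ⊢
      obtain ⟨i, hi, rfl⟩ := ht
      omega
    have hnat : (∑ i ∈ Finset.range (n - k + 1 - 2),
          2 ^ ((n - k + 1) * (n - k) / 2 - (n - k + 1) - i))
        < ∑ j ∈ Finset.range k, 2 ^ ((n - j) * (n - j - 1) / 2 - (k - j)) := by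
      have hle : (2:ℕ) ^ ((n - k + 1) * (n - k) / 2 - (n - k + 1) + 1)
          ≤ 2 ^ (n * (n - 1) / 2 - k) := Nat.pow_le_pow_right (by norm_num) hEa
      have hone : (1:ℕ) ≤ 2 ^ ((n - k + 1) * (n - k) / 2 - (n - k + 1) + 1) :=
        Nat.one_le_two_pow
      omega
    have hcast : Pexp n k 2 =
        ((∑ j ∈ Finset.range k, 2 ^ ((n - j) * (n - j - 1) / 2 - (k - j)) : ℕ) : ℝ)
        - ((∑ i ∈ Finset.range (n - k + 1 - 2),
            2 ^ ((n - k + 1) * (n - k) / 2 - (n - k + 1) - i) : ℕ) : ℝ) := by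
      unfold Pexp
      push_cast
      ring
    rw [hcast]
    have : ((∑ i ∈ Finset.range (n - k + 1 - 2),
          2 ^ ((n - k + 1) * (n - k) / 2 - (n - k + 1) - i) : ℕ) : ℝ)
        < ((∑ j ∈ Finset.range k, 2 ^ ((n - j) * (n - j - 1) / 2 - (k - j)) : ℕ) : ℝ) := by
      exact_mod_cast hnat
    linarith
  refine ⟨h1, h2, hpos, ?_⟩
  -- IVT
  have hcont : Continuous (Pexp n k) := by
    unfold Pexp
    apply Continuous.sub <;> exact continuous_finset_sum _ (fun i _ => continuous_pow _)
  have hivt := intermediate_value_Ioo (le_of_lt one_lt_two) hcont.continuousOn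
  have h0mem : (0 : ℝ) ∈ Set.Ioo (Pexp n k 1) (Pexp n k 2) := by
    constructor
    · rw [h1]; linarith
    · exact hpos
  obtain ⟨r, hr, hr0⟩ := hivt h0mem
  exact ⟨r, hr, hr0⟩
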